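/- arXiv:2509.08466 — 4 statements merged into one kernel-verified Lean document; each statement's English description precedes it below -/
import Mathlib

section
/- Let μ be a σ-finite Borel measure on [0,∞), V a separable Hilbert space, η ∈ ℝ and δ' < δ. Then for every strongly measurable y : [0,∞) → V with |||y|||_{δ,η} < ∞ and every t > 0: ∫_{(0,∞)} e^{−2xt} ‖y(x)‖_V² w_{δ',η}(x) μ(dx) ≤ max{1, C(δ−δ')} · (max(1,t))^{−(δ−δ')} · |||y|||_{δ,η}², where C(ϱ) = 2^{−ϱ} ϱ^{ϱ} e^{−ϱ}. (This expresses the rate of convergence ‖S(t) − S_∞‖ ≤ max{1, C(δ−δ')}^{1/2} (max(1,t))^{−(δ−δ')/2} of the multiplication semigroup S(t)y(x) = e^{−xt} y(x) measured from the weighted space with weight w_{δ,η} into the one with weight w_{δ',η}.) -/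
open MeasureTheory Set

/-- The weight function `w_{δ,η}` on `[0,∞)`: `w_{δ,η}(0) = 1`, `w_{δ,η}(x) = x^{−δ}` for
`x ∈ (0,1]` and `w_{δ,η}(x) = x^{η}` for `x ∈ (1,∞)`. -/
noncomputable def weightW (δ η x : ℝ) : ℝ :=
  if x = 0 then 1 else if x ≤ 1 then x ^ (-δ) else x ^ η

/-- The constant `C(ϱ) = 2^{−ϱ} ϱ^{ϱ} e^{−ϱ}`. -/
noncomputable def constC (ϱ : ℝ) : ℝ := 2 ^ (-ϱ) * ϱ ^ ϱ * Real.exp (-ϱ)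

lemma measurable_weightW (δ η : ℝ) : Measurable (weightW δ η) := by
  have h1 : Measurable (fun x : ℝ => x ^ (-δ)) := by measurability
  have h2 : Measurable (fun x : ℝ => x ^ η) := by measurability
  unfold weightW
  exact Measurable.ite (measurableSet_eq) measurable_const
    (Measurable.ite measurableSet_Iic h1 h2)

lemma weightW_pos (δ η : ℝ) {x : ℝ} (hx : 0 ≤ x) : 0 < weightW δ η x := by
  unfold weightW
  rcases eq_or_lt_of_le hx with h | h
  · simp [← h]
  · simp only [h.ne', if_false]
    split <;> exact Real.rpow_pos_of_pos h _

lemma aux_exp (ρ s : ℝ) (hρ : 0 < ρ) (hs : 0 < s) :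
    s ^ ρ * Real.exp (-s) ≤ ρ ^ ρ * Real.exp (-ρ) := by
  rw [Real.rpow_def_of_pos hs, Real.rpow_def_of_pos hρ, ← Real.exp_add, ← Real.exp_add]
  apply Real.exp_le_exp.mpr
  have h := Real.log_le_sub_one_of_pos (div_pos hs hρ)
  rw [Real.log_div hs.ne' hρ.ne'] at h
  have h2 := mul_le_mul_of_nonneg_left h hρ.le
  have h3 : ρ * (s / ρ - 1) = s - ρ := by field_simp
  nlinarith [h2]

lemma aux_bound (ρ t x : ℝ) (hρ : 0 < ρ) (ht : 0 < t) (hx : 0 < x) :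
    Real.exp (-2 * x * t) * x ^ ρ ≤ constC ρ * t ^ (-ρ) := by
  have hs : 0 < 2 * x * t := by positivity
  have h1 := aux_exp ρ (2 * x * t) hρ hs
  have h2 : (2 * x * t) ^ ρ = 2 ^ ρ * x ^ ρ * t ^ ρ := by
    rw [Real.mul_rpow (by positivity) ht.le, Real.mul_rpow (by norm_num) hx.le]
  have e2 : (0:ℝ) < 2 ^ ρ := Real.rpow_pos_of_pos (by norm_num) ρ
  have et : (0:ℝ) < t ^ ρ := Real.rpow_pos_of_pos ht ρ
  rw [← mul_le_mul_iff_of_pos_right (mul_pos e2 et)]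
  calc Real.exp (-2 * x * t) * x ^ ρ * (2 ^ ρ * t ^ ρ)
      = (2 * x * t) ^ ρ * Real.exp (-(2 * x * t)) := by rw [h2]; ring_nf
    _ ≤ ρ ^ ρ * Real.exp (-ρ) := h1
    _ = constC ρ * t ^ (-ρ) * (2 ^ ρ * t ^ ρ) := by
        rw [constC, Real.rpow_neg (by norm_num : (0:ℝ) ≤ 2), Real.rpow_neg ht.le]
        field_simp

lemma weight_pointwise (δ' δ η t x : ℝ) (hδ : δ' < δ) (ht : 0 < t) (hx : 0 < x) :
    Real.exp (-2 * x * t) * weightW δ' η x ≤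
      max 1 (constC (δ - δ')) * (max 1 t) ^ (-(δ - δ')) * weightW δ η x := by
  set ρ := δ - δ' with hρdef
  have hρ : 0 < ρ := by simp only [hρdef]; linarith
  have hCle : constC ρ ≤ max 1 (constC ρ) := le_max_right _ _
  have hexple : Real.exp (-2 * x * t) ≤ 1 := by
    apply Real.exp_le_one_iff.mpr; nlinarith
  by_cases hx1 : x ≤ 1
  · have hw' : weightW δ' η x = x ^ (-δ') := by simp [weightW, hx.ne', hx1]
    have hw : weightW δ η x = x ^ (-δ) := by simp [weightW, hx.ne', hx1]
    rw [hw', hw]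
    have hsplit : x ^ (-δ') = x ^ (-δ) * x ^ ρ := by
      rw [← Real.rpow_add hx, hρdef]; ring_nf
    have hwpos : (0:ℝ) < x ^ (-δ) := Real.rpow_pos_of_pos hx _
    rw [hsplit]
    have key : Real.exp (-2 * x * t) * x ^ ρ ≤ max 1 (constC ρ) * (max 1 t) ^ (-ρ) := by
      by_cases h1t : 1 ≤ t
      · rw [max_eq_right h1t]
        calc Real.exp (-2 * x * t) * x ^ ρ ≤ constC ρ * t ^ (-ρ) := aux_bound ρ t x hρ ht hx
          _ ≤ max 1 (constC ρ) * t ^ (-ρ) :=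
            mul_le_mul_of_nonneg_right hCle (Real.rpow_pos_of_pos ht _).le
      · rw [max_eq_left (le_of_not_ge h1t), Real.one_rpow, mul_one]
        have hxρ : x ^ ρ ≤ 1 := Real.rpow_le_one hx.le hx1 hρ.le
        have : Real.exp (-2 * x * t) * x ^ ρ ≤ 1 := by
          nlinarith [Real.exp_pos (-2 * x * t), Real.rpow_pos_of_pos hx ρ]
        exact this.trans (le_max_left _ _)
    calc Real.exp (-2 * x * t) * (x ^ (-δ) * x ^ ρ)
        = Real.exp (-2 * x * t) * x ^ ρ * x ^ (-δ) := by ring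
      _ ≤ max 1 (constC ρ) * (max 1 t) ^ (-ρ) * x ^ (-δ) :=
          mul_le_mul_of_nonneg_right key hwpos.le
    -- need to rewrite goal lhs with hsplit
  · push_neg at hx1
    have hw' : weightW δ' η x = x ^ η := by
      simp [weightW, hx.ne', not_le.mpr hx1]
    have hw : weightW δ η x = x ^ η := by
      simp [weightW, hx.ne', not_le.mpr hx1]
    rw [hw', hw]
    have hwpos : (0:ℝ) < x ^ η := Real.rpow_pos_of_pos hx _
    have key : Real.exp (-2 * x * t) ≤ max 1 (constC ρ) * (max 1 t) ^ (-ρ) := by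
      by_cases h1t : 1 ≤ t
      · rw [max_eq_right h1t]
        have h1 : Real.exp (-2 * x * t) ≤ Real.exp (-2 * 1 * t) := by
          apply Real.exp_le_exp.mpr; nlinarith
        have h2 := aux_bound ρ t 1 hρ ht one_pos
        rw [Real.one_rpow, mul_one] at h2
        calc Real.exp (-2 * x * t) ≤ Real.exp (-2 * 1 * t) := h1
          _ ≤ constC ρ * t ^ (-ρ) := h2
          _ ≤ max 1 (constC ρ) * t ^ (-ρ) :=
            mul_le_mul_of_nonneg_right hCle (Real.rpow_pos_of_pos ht _).le
      · rw [max_eq_left (le_of_not_ge h1t), Real.one_rpow, mul_one]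
        exact hexple.trans (le_max_left _ _)
    exact mul_le_mul_of_nonneg_right key hwpos.le

/-- Let `μ` be a σ-finite Borel measure on `[0,∞)`, `V` a separable Hilbert
space, `η ∈ ℝ` and `δ' < δ`.  Then for every strongly measurable `y : [0,∞) → V` with
`|||y|||_{δ,η} < ∞` and every `t > 0`:
`∫_{(0,∞)} e^{−2xt} ‖y(x)‖² w_{δ',η}(x) μ(dx)
  ≤ max{1, C(δ−δ')} · (max(1,t))^{−(δ−δ')} · |||y|||_{δ,η}²`. -/
theorem multiplication_semigroup_convergence_rate
    {V : Type*} [NormedAddCommGroup V] [InnerProductSpace ℝ V]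
    [SecondCountableTopology V] [CompleteSpace V]
    (μ : Measure ℝ) [SigmaFinite μ]
    (η δ δ' : ℝ) (hδ : δ' < δ)
    (y : ℝ → V) (hy : StronglyMeasurable y)
    (hfin : IntegrableOn (fun x => ‖y x‖ ^ 2 * weightW δ η x) (Set.Ici 0) μ)
    (t : ℝ) (ht : 0 < t) :
    (∫ x in Set.Ioi (0 : ℝ), Real.exp (-2 * x * t) * ‖y x‖ ^ 2 * weightW δ' η x ∂μ) ≤
      max 1 (constC (δ - δ')) * (max 1 t) ^ (-(δ - δ')) *
        ∫ x in Set.Ici (0 : ℝ), ‖y x‖ ^ 2 * weightW δ η x ∂μ  := by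
  set M : ℝ := max 1 (constC (δ - δ')) * (max 1 t) ^ (-(δ - δ')) with hMdef
  have hM : 0 ≤ M := by
    apply mul_nonneg (le_trans zero_le_one (le_max_left _ _))
    exact (Real.rpow_pos_of_pos (lt_of_lt_of_le one_pos (le_max_left 1 t)) _).le
  set F : ℝ → ℝ := fun x => Real.exp (-2 * x * t) * ‖y x‖ ^ 2 * weightW δ' η x with hF
  set G : ℝ → ℝ := fun x => ‖y x‖ ^ 2 * weightW δ η x with hG
  have hFG : ∀ x ∈ Set.Ioi (0:ℝ), F x ≤ M * G x := by
    intro x hx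
    have h := weight_pointwise δ' δ η t x hδ ht hx
    have h2 := mul_le_mul_of_nonneg_left h (sq_nonneg ‖y x‖)
    simp only [hF, hG, hMdef]
    calc Real.exp (-2 * x * t) * ‖y x‖ ^ 2 * weightW δ' η x
        = ‖y x‖ ^ 2 * (Real.exp (-2 * x * t) * weightW δ' η x) := by ring
      _ ≤ ‖y x‖ ^ 2 * (max 1 (constC (δ - δ')) * (max 1 t) ^ (-(δ - δ')) * weightW δ η x) := h2
      _ = max 1 (constC (δ - δ')) * (max 1 t) ^ (-(δ - δ')) * (‖y x‖ ^ 2 * weightW δ η x) := by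
          ring
  have hFnn : ∀ x ∈ Set.Ioi (0:ℝ), 0 ≤ F x := by
    intro x hx
    exact mul_nonneg (mul_nonneg (Real.exp_pos _).le (sq_nonneg _))
      (weightW_pos δ' η (le_of_lt hx)).le
  have hGnn : ∀ x ∈ Set.Ici (0:ℝ), 0 ≤ G x :=
    fun x hx => mul_nonneg (sq_nonneg _) (weightW_pos δ η hx).le
  have hMG_int : IntegrableOn (fun x => M * G x) (Set.Ici 0) μ := hfin.const_mul M
  have hMG_int' : IntegrableOn (fun x => M * G x) (Set.Ioi 0) μ :=
    hMG_int.mono_set Set.Ioi_subset_Ici_self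
  have hFm : AEStronglyMeasurable F (μ.restrict (Set.Ioi 0)) := by
    apply Measurable.aestronglyMeasurable
    exact (((measurable_id.const_mul (-2)).mul_const t).exp.mul
      (hy.norm.measurable.pow measurable_const)).mul (measurable_weightW δ' η)
  have hF_int : IntegrableOn F (Set.Ioi 0) μ := by
    apply Integrable.mono' hMG_int' hFm
    filter_upwards [self_mem_ae_restrict measurableSet_Ioi] with x hx
    rw [Real.norm_eq_abs, abs_of_nonneg (hFnn x hx)]
    exact hFG x hx
  calc (∫ x in Set.Ioi (0:ℝ), F x ∂μ) ≤ ∫ x in Set.Ioi (0:ℝ), M * G x ∂μ :=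
        setIntegral_mono_on hF_int hMG_int' measurableSet_Ioi hFG
    _ ≤ ∫ x in Set.Ici (0:ℝ), M * G x ∂μ := by
        apply setIntegral_mono_set hMG_int
        · filter_upwards [self_mem_ae_restrict measurableSet_Ici] with x hx
          exact mul_nonneg hM (hGnn x hx)
        · exact HasSubset.Subset.eventuallyLE Set.Ioi_subset_Ici_self
    _ = M * ∫ x in Set.Ici (0:ℝ), G x ∂μ := by rw [integral_const_mul]
end

section
/- Let δ ≥ 0 and η ≥ 0, and let (y, y') be as in the context with N_{δ,η}(y) < ∞. Then the shift semigroup is strongly continuous at the origin on the modified Filipović space, i.e. lim_{t→0⁺} ( ‖y(1+t) − y(1)‖_V² + ∫_0^∞ ‖y'(x+t) − y'(x)‖_V² v_{δ,η}(x) dx ) = 0. -/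
open MeasureTheory Set Filter
open scoped ENNReal Topology

/-- The weight function `v_{δ,η}` on `(0,∞)`: `v_{δ,η}(x) = x^{η}` for `x ∈ (0,1]` and
`v_{δ,η}(x) = x^{δ}` for `x ∈ (1,∞)`. -/
noncomputable def weightV (δ η x : ℝ) : ℝ :=
  if x ≤ 1 then x ^ η else x ^ δ

lemma weightV_pos {δ η x : ℝ} (hx : 0 < x) : 0 < weightV δ η x := by
  unfold weightV; split <;> exact Real.rpow_pos_of_pos hx _

lemma weightV_mono {δ η : ℝ} (hδ : 0 ≤ δ) (hη : 0 ≤ η) {a b : ℝ} (ha : 0 < a) (hab : a ≤ b) :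
    weightV δ η a ≤ weightV δ η b := by
  unfold weightV
  rcases le_or_gt b 1 with hb | hb
  · rw [if_pos (hab.trans hb), if_pos hb]
    exact Real.rpow_le_rpow ha.le hab hη
  · rw [if_neg (not_le.mpr hb)]
    rcases le_or_gt a 1 with ha1 | ha1
    · rw [if_pos ha1]
      calc a ^ η ≤ 1 := Real.rpow_le_one ha.le ha1 hη
        _ ≤ b ^ δ := Real.one_le_rpow hb.le hδ
    · rw [if_neg (not_le.mpr ha1)]
      exact Real.rpow_le_rpow (by linarith) hab hδ

lemma continuous_weightV {δ η : ℝ} (hδ : 0 ≤ δ) (hη : 0 ≤ η) :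
    Continuous (weightV δ η) := by
  have hc : ∀ z : ℝ, 0 ≤ z → Continuous fun x : ℝ => x ^ z := by
    intro z hz
    rcases eq_or_lt_of_le hz with rfl | hz'
    · simpa using continuous_const.congr (fun x => (Real.rpow_zero x).symm)
    · exact continuous_iff_continuousAt.mpr fun x =>
        Real.continuousAt_rpow_const x z (Or.inr hz'.le)
  exact (hc η hη).if_le (hc δ hδ) continuous_id continuous_const
    (fun x hx => by simp [hx])

lemma mp_shift (t : ℝ) :
    MeasurePreserving (fun x : ℝ => x + t) (volume.restrict (Ioi 0))
      (volume.restrict (Ioi t)) := by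
  refine ⟨measurable_add_const t, ?_⟩
  have hpre : (fun x : ℝ => x + t) ⁻¹' (Ioi t) = Ioi 0 := by
    ext x; simp
  rw [← hpre, ← Measure.restrict_map (measurable_add_const t) measurableSet_Ioi,
    (measurePreserving_add_right volume t).map_eq]

set_option maxHeartbeats 2000000 in
/-- Let `δ ≥ 0`, `η ≥ 0`, and let `(y,y')` be a pair with `y'` locally
Bochner integrable, `y(b) − y(a) = ∫_a^b y'` and `N_{δ,η}(y) < ∞`.  Then the shift
semigroup is strongly continuous at the origin:
`lim_{t→0⁺} (‖y(1+t) − y(1)‖² + ∫_0^∞ ‖y'(x+t) − y'(x)‖² v_{δ,η}(x) dx) = 0`. -/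
theorem shift_semigroup_strongly_continuous
    {V : Type*} [NormedAddCommGroup V] [InnerProductSpace ℝ V]
    [SecondCountableTopology V] [CompleteSpace V]
    (δ η : ℝ) (hδ : 0 ≤ δ) (hη : 0 ≤ η)
    (y y' : ℝ → V)
    (hloc : ∀ a b : ℝ, 0 < a → IntegrableOn y' (Set.Ioc a b))
    (hftc : ∀ a b : ℝ, 0 < a → a ≤ b → y b - y a = ∫ x in a..b, y' x)
    (hfin : IntegrableOn (fun x => ‖y' x‖ ^ 2 * weightV δ η x) (Set.Ioi 0)) :
    Tendsto (fun t : ℝ =>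
        ‖y (1 + t) - y 1‖ ^ 2
          + ∫ x in Set.Ioi (0 : ℝ), ‖y' (x + t) - y' x‖ ^ 2 * weightV δ η x)
      (nhdsWithin 0 (Set.Ioi 0)) (nhds 0) := by
  haveI : Fact ((1 : ℝ≥0∞) ≤ 2) := ⟨one_le_two⟩
  set l : Filter ℝ := nhdsWithin 0 (Set.Ioi 0) with hl
  set v : ℝ → ℝ := weightV δ η with hvdef
  set sv : ℝ → ℝ := fun x => Real.sqrt (v x) with hsvdef
  have hvc : Continuous v := continuous_weightV hδ hη
  have hsvc : Continuous sv := Real.continuous_sqrt.comp hvc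
  have hsv_nonneg : ∀ x, 0 ≤ sv x := fun x => Real.sqrt_nonneg _
  have hsv_sq : ∀ x : ℝ, 0 < x → sv x ^ 2 = v x := fun x hx =>
    Real.sq_sqrt (weightV_pos hx).le
  have hsv_mono : ∀ a b : ℝ, 0 < a → a ≤ b → sv a ≤ sv b := fun a b ha hab =>
    Real.sqrt_le_sqrt (weightV_mono hδ hη ha hab)
  set μ0 : Measure ℝ := volume.restrict (Ioi 0) with hμ0
  -- measurability of `y'` on `(0, ∞)`
  have hy'm : AEStronglyMeasurable y' μ0 := by
    have hU : Ioi (0:ℝ) = ⋃ n : ℕ, Ioc (1 / ((n:ℝ) + 1)) ((n:ℝ) + 1) := by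
      ext x
      simp only [mem_Ioi, mem_iUnion, mem_Ioc]
      constructor
      · intro hx
        obtain ⟨n, hn⟩ := exists_nat_gt (max (1 / x) x)
        have h1 : 1 / x < n := lt_of_le_of_lt (le_max_left _ _) hn
        have h2 : x < n := lt_of_le_of_lt (le_max_right _ _) hn
        refine ⟨n, ?_, by push_cast; linarith⟩
        rw [div_lt_iff₀ (by positivity)]
        rw [div_lt_iff₀ hx] at h1
        nlinarith
      · rintro ⟨n, h1, h2⟩
        have : (0:ℝ) < 1 / (n + 1) := by positivity
        linarith
    rw [hμ0, hU, aestronglyMeasurable_iUnion_iff]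
    intro n
    exact (hloc _ _ (by positivity)).aestronglyMeasurable
  have hy'sq : AEStronglyMeasurable (fun u => ‖y' u‖ ^ 2) μ0 :=
    (hy'm.norm.mul hy'm.norm).congr
      (Eventually.of_forall fun u => (pow_two ‖y' u‖).symm)
  -- the auxiliary `L²(ℝ)` function `G`
  set G : ℝ → V := (Ioi 0).indicator (fun x => sv x • y' x) with hGdef
  have hGx : ∀ x : ℝ, 0 < x → G x = sv x • y' x := fun x hx => indicator_of_mem hx _
  have hGm : AEStronglyMeasurable G volume :=
    (aestronglyMeasurable_indicator_iff measurableSet_Ioi).mpr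
      (hsvc.aestronglyMeasurable.smul hy'm)
  have hGsq : (fun x => ‖G x‖ ^ 2) = (Ioi 0).indicator (fun x => ‖y' x‖ ^ 2 * v x) := by
    funext x
    by_cases hx : x ∈ Ioi 0
    · rw [hGdef]
      rw [indicator_of_mem hx, indicator_of_mem hx, norm_smul, mul_pow,
        Real.norm_of_nonneg (hsv_nonneg x), hsv_sq x hx, mul_comm]
    · rw [hGdef, indicator_of_notMem hx, indicator_of_notMem hx, norm_zero]
      simp
  have hGmem : MemLp G 2 volume := by
    rw [memLp_two_iff_integrable_sq_norm hGm, hGsq,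
      integrable_indicator_iff measurableSet_Ioi]
    exact hfin
  -- the translation semigroup in `L²`
  set T : C(ℝ, C(ℝ, ℝ)) :=
    ContinuousMap.curry ⟨fun p : ℝ × ℝ => p.2 + p.1, by fun_prop⟩ with hT
  have hmp : ∀ t : ℝ, MeasurePreserving (T t) volume volume := fun t =>
    measurePreserving_add_right volume t
  set Gel : Lp V 2 volume := hGmem.toLp G with hGL
  set L : ℝ → Lp V 2 volume := fun t => Lp.compMeasurePreserving (T t) (hmp t) Gel with hLdef
  have hLt : Tendsto L l (𝓝 (L 0)) :=
    Filter.Tendsto.compMeasurePreservingLp tendsto_const_nhds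
      ((T.continuous.tendsto 0).mono_left nhdsWithin_le_nhds) hmp (hmp 0) (by norm_num)
  have hnormsq : ∀ f : Lp V 2 volume, ‖f‖ ^ 2 = ∫ x : ℝ, ‖f x‖ ^ 2 ∂volume := by
    intro f
    rw [← real_inner_self_eq_norm_sq, L2.inner_def]
    exact integral_congr_ae (Eventually.of_forall fun x => real_inner_self_eq_norm_sq _)
  have hcoe : ∀ t : ℝ, ((L t - L 0 : Lp V 2 volume) : ℝ → V)
      =ᵐ[volume] fun x => G (x + t) - G x := by
    intro t
    have h1 : (L t : ℝ → V) =ᵐ[volume] fun x => G (x + t) := by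
      refine (Lp.coeFn_compMeasurePreserving Gel (hmp t)).trans ?_
      exact (hmp t).quasiMeasurePreserving.ae_eq_comp (hGmem.coeFn_toLp)
    have h0 : (L 0 : ℝ → V) =ᵐ[volume] G := by
      refine (Lp.coeFn_compMeasurePreserving Gel (hmp 0)).trans ?_
      refine ((hmp 0).quasiMeasurePreserving.ae_eq_comp (hGmem.coeFn_toLp)).trans ?_
      exact Eventually.of_forall fun x => by simp [hT]
    filter_upwards [Lp.coeFn_sub (L t) (L 0), h1, h0] with x hx h1x h0x
    rw [hx, Pi.sub_apply, h1x, h0x]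
  have hAeq : ∀ t : ℝ, (∫ x, ‖G (x + t) - G x‖ ^ 2 ∂volume) = ‖L t - L 0‖ ^ 2 := by
    intro t
    rw [hnormsq]
    exact (integral_congr_ae ((hcoe t).mono fun x hx => by rw [hx])).symm
  have hA : Tendsto (fun t => ∫ x, ‖G (x + t) - G x‖ ^ 2 ∂volume) l (𝓝 0) := by
    have h1 : Tendsto (fun t => ‖L t - L 0‖ ^ 2) l (𝓝 (‖L 0 - L 0‖ ^ 2)) :=
      ((hLt.sub tendsto_const_nhds).norm.pow 2)
    simp only [sub_self, norm_zero] at h1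
    rw [show (0:ℝ) = 0 ^ 2 by norm_num]
    exact h1.congr fun t => (hAeq t).symm
  -- the correction term
  set F : ℝ → ℝ → ℝ :=
    fun t => (Ioi t).indicator (fun u => (sv u - sv (u - t)) ^ 2 * ‖y' u‖ ^ 2) with hFdef
  have hFmeas : ∀ t : ℝ, AEStronglyMeasurable (F t) μ0 := by
    intro t
    rw [hFdef, hμ0]
    apply AEStronglyMeasurable.indicator _ measurableSet_Ioi
    exact (((hsvc.sub (hsvc.comp (continuous_id.sub continuous_const))).pow 2)
      |>.aestronglyMeasurable.mul hy'sq)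
  have hFbd : ∀ t : ℝ, 0 < t → ∀ᵐ u ∂μ0, ‖F t u‖ ≤ ‖y' u‖ ^ 2 * v u := by
    intro t ht
    filter_upwards [ae_restrict_mem measurableSet_Ioi] with u hu
    have hvu : 0 ≤ v u := (weightV_pos hu).le
    by_cases hut : u ∈ Ioi t
    · simp only [hFdef]; rw [indicator_of_mem hut]
      have h1 : 0 < u - t := sub_pos.mpr hut
      have h2 : sv (u - t) ≤ sv u := hsv_mono _ _ h1 (by linarith)
      have h3 : 0 ≤ sv u - sv (u - t) := sub_nonneg.mpr h2
      rw [Real.norm_of_nonneg (by positivity)]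
      have h4 : (sv u - sv (u - t)) ^ 2 ≤ v u := by
        have h5 : sv u - sv (u - t) ≤ sv u := by linarith [hsv_nonneg (u - t)]
        calc (sv u - sv (u - t)) ^ 2 ≤ sv u ^ 2 := pow_le_pow_left₀ h3 h5 2
          _ = v u := hsv_sq u hu
      calc (sv u - sv (u - t)) ^ 2 * ‖y' u‖ ^ 2 ≤ v u * ‖y' u‖ ^ 2 :=
            mul_le_mul_of_nonneg_right h4 (by positivity)
        _ = ‖y' u‖ ^ 2 * v u := mul_comm _ _
    · simp only [hFdef]; rw [indicator_of_notMem hut, norm_zero]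
      positivity
  have hFint : ∀ t : ℝ, 0 < t → Integrable (F t) μ0 := fun t ht =>
    Integrable.mono' hfin (hFmeas t) (hFbd t ht)
  set Jf : ℝ → ℝ := fun t => ∫ u in Ioi (0:ℝ), F t u with hJfdef
  have hJ : Tendsto Jf l (𝓝 0) := by
    rw [show (0:ℝ) = ∫ (_ : ℝ) in Ioi (0:ℝ), (0:ℝ) by simp]
    apply tendsto_integral_filter_of_dominated_convergence (fun u => ‖y' u‖ ^ 2 * v u)
    · exact Eventually.of_forall hFmeas
    · filter_upwards [self_mem_nhdsWithin] with t ht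
      exact hFbd t ht
    · exact hfin
    · filter_upwards [ae_restrict_mem measurableSet_Ioi] with u hu
      have hev : ∀ᶠ t in l, (sv u - sv (u - t)) ^ 2 * ‖y' u‖ ^ 2 = F t u := by
        filter_upwards [Ioo_mem_nhdsGT_of_mem (⟨le_refl (0:ℝ), hu⟩ : (0:ℝ) ∈ Ico 0 u)]
          with t htu
        simp only [hFdef]; rw [indicator_of_mem (show u ∈ Ioi t from htu.2)]
      have h1 : Tendsto (fun t : ℝ => u - t) l (𝓝 u) := by
        have := (tendsto_const_nhds.sub tendsto_id : Tendsto (fun t : ℝ => u - t) (𝓝 0) (𝓝 (u - 0)))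
        simpa using this.mono_left nhdsWithin_le_nhds
      have h2 : Tendsto (fun t : ℝ => (sv u - sv (u - t)) ^ 2 * ‖y' u‖ ^ 2) l
          (𝓝 ((sv u - sv u) ^ 2 * ‖y' u‖ ^ 2)) :=
        (((tendsto_const_nhds.sub (hsvc.continuousAt.tendsto.comp h1)).pow 2).mul_const _)
      simp only [sub_self] at h2
      refine Tendsto.congr' hev ?_
      simpa using h2
  -- the key inequality
  have hemb : ∀ t : ℝ, MeasurableEmbedding (fun x : ℝ => x + t) := fun t =>
    (MeasurableEquiv.addRight t).measurableEmbedding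
  have key : ∀ t : ℝ, 0 < t →
      (∫ x in Ioi (0:ℝ), ‖y' (x + t) - y' x‖ ^ 2 * v x) ≤
        2 * (∫ x, ‖G (x + t) - G x‖ ^ 2 ∂volume) + 2 * Jf t := by
    intro t ht
    have hPmem : MemLp (fun x => G (x + t) - G x) 2 volume :=
      (hGmem.comp_measurePreserving (measurePreserving_add_right volume t)).sub hGmem
    have hPint : Integrable (fun x => ‖G (x + t) - G x‖ ^ 2) volume :=
      (memLp_two_iff_integrable_sq_norm hPmem.aestronglyMeasurable).mp hPmem
    have hFcomp : Integrable (fun x => F t (x + t)) μ0 := by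
      rw [hμ0]
      have h2 := hFint t ht
      rw [hμ0] at h2
      have h1 : IntegrableOn (F t) (Ioi t) volume :=
        IntegrableOn.mono_set h2 (Ioi_subset_Ioi ht.le)
      have h3 := ((mp_shift t).integrable_comp_emb (hemb t)).mpr h1
      simpa [Function.comp_def] using h3
    have hptwise : ∀ᵐ x ∂μ0, ‖y' (x + t) - y' x‖ ^ 2 * v x ≤
        2 * ‖G (x + t) - G x‖ ^ 2 + 2 * F t (x + t) := by
      filter_upwards [ae_restrict_mem measurableSet_Ioi] with x hx
      have hx0 : (0:ℝ) < x := hx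
      have hxt : (0:ℝ) < x + t := by linarith
      have hFxt : F t (x + t) = (sv (x + t) - sv x) ^ 2 * ‖y' (x + t)‖ ^ 2 := by
        simp only [hFdef]; rw [indicator_of_mem (by simp [mem_Ioi]; linarith)]
        simp
      have hdecomp : sv x • (y' (x + t) - y' x) =
          (G (x + t) - G x) - (sv (x + t) - sv x) • y' (x + t) := by
        rw [hGx _ hxt, hGx _ hx0]
        module
      have heq : ‖y' (x + t) - y' x‖ ^ 2 * v x = ‖sv x • (y' (x + t) - y' x)‖ ^ 2 := by
        rw [norm_smul, mul_pow, Real.norm_of_nonneg (hsv_nonneg x), hsv_sq x hx0, mul_comm]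
      rw [heq, hFxt]
      have h1 : ‖sv x • (y' (x + t) - y' x)‖ ≤
          ‖G (x + t) - G x‖ + ‖(sv (x + t) - sv x) • y' (x + t)‖ := by
        rw [hdecomp]; exact norm_sub_le _ _
      have h2 : ‖(sv (x + t) - sv x) • y' (x + t)‖ ^ 2 =
          (sv (x + t) - sv x) ^ 2 * ‖y' (x + t)‖ ^ 2 := by
        rw [norm_smul, mul_pow, Real.norm_eq_abs, sq_abs]
      nlinarith [norm_nonneg (sv x • (y' (x + t) - y' x)),
        norm_nonneg (G (x + t) - G x), norm_nonneg ((sv (x + t) - sv x) • y' (x + t)),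
        sq_nonneg (‖G (x + t) - G x‖ - ‖(sv (x + t) - sv x) • y' (x + t)‖)]
    have h2 : (∫ x in Ioi (0:ℝ), ‖y' (x + t) - y' x‖ ^ 2 * v x) ≤
        ∫ x in Ioi (0:ℝ), (2 * ‖G (x + t) - G x‖ ^ 2 + 2 * F t (x + t)) := by
      apply integral_mono_of_nonneg
      · filter_upwards [ae_restrict_mem measurableSet_Ioi] with x hx
        have hvx : 0 ≤ v x := (weightV_pos hx).le
        positivity
      · exact (hPint.restrict.const_mul 2).add (hFcomp.const_mul 2)
      · exact hptwise
    have h3 : (∫ x in Ioi (0:ℝ), (2 * ‖G (x + t) - G x‖ ^ 2 + 2 * F t (x + t))) =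
        2 * (∫ x in Ioi (0:ℝ), ‖G (x + t) - G x‖ ^ 2) +
          2 * ∫ x in Ioi (0:ℝ), F t (x + t) := by
      rw [integral_add (hPint.restrict.const_mul 2) (hFcomp.const_mul 2),
        integral_const_mul, integral_const_mul]
    have h4 : (∫ x in Ioi (0:ℝ), ‖G (x + t) - G x‖ ^ 2) ≤
        ∫ x, ‖G (x + t) - G x‖ ^ 2 ∂volume :=
      setIntegral_le_integral hPint (Eventually.of_forall fun x => by positivity)
    have h5 : (∫ x in Ioi (0:ℝ), F t (x + t)) = Jf t := by
      have e1 : (∫ x, F t (x + t) ∂μ0) = ∫ u, F t u ∂(volume.restrict (Ioi t)) :=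
        (mp_shift t).integral_comp (hemb t) (F t)
      rw [hμ0] at e1
      rw [e1]; simp only [hJfdef, hFdef]
      rw [integral_indicator measurableSet_Ioi, integral_indicator measurableSet_Ioi,
        Measure.restrict_restrict measurableSet_Ioi,
        Measure.restrict_restrict measurableSet_Ioi,
        inter_self, inter_eq_self_of_subset_left (Ioi_subset_Ioi ht.le)]
    linarith
  -- nonnegativity of the integral
  have hI0 : ∀ t : ℝ, 0 ≤ ∫ x in Ioi (0:ℝ), ‖y' (x + t) - y' x‖ ^ 2 * v x := by
    intro t
    apply integral_nonneg_of_ae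
    filter_upwards [ae_restrict_mem measurableSet_Ioi] with x hx
    have hvx : 0 ≤ v x := (weightV_pos hx).le
    positivity
  -- the integral term tends to `0`
  have hIlim : Tendsto (fun t => ∫ x in Ioi (0:ℝ), ‖y' (x + t) - y' x‖ ^ 2 * v x) l (𝓝 0) := by
    apply squeeze_zero' (Eventually.of_forall hI0)
    · filter_upwards [self_mem_nhdsWithin] with t ht
      exact key t ht
    · have := (hA.const_mul 2).add (hJ.const_mul 2)
      simpa using this
  -- the boundary term tends to `0`
  have hN : Tendsto (fun t => ‖y (1 + t) - y 1‖ ^ 2) l (𝓝 0) := by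
    have hint : IntervalIntegrable y' volume 1 2 :=
      (intervalIntegrable_iff_integrableOn_Ioc_of_le one_le_two).mpr (hloc 1 2 one_pos)
    have hc : ContinuousWithinAt (fun b => ∫ x in (1:ℝ)..b, y' x) (Icc 1 2) 1 := by
      apply intervalIntegral.continuousWithinAt_primitive (measure_singleton 1)
      rw [min_self, max_eq_right one_le_two]
      exact hint
    have hmap : Tendsto (fun t : ℝ => 1 + t) l (𝓝[Icc 1 2] 1) := by
      rw [tendsto_nhdsWithin_iff]
      constructor
      · have := (tendsto_const_nhds.add tendsto_id :
          Tendsto (fun t : ℝ => 1 + t) (𝓝 0) (𝓝 (1 + 0)))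
        simpa using this.mono_left nhdsWithin_le_nhds
      · filter_upwards [Ioo_mem_nhdsGT_of_mem (⟨le_refl (0:ℝ), one_pos⟩ : (0:ℝ) ∈ Ico 0 1)]
          with t htt
        exact ⟨by linarith [htt.1], by linarith [htt.2]⟩
    have h2 : Tendsto (fun t => ∫ x in (1:ℝ)..(1 + t), y' x) l (𝓝 0) := by
      have := hc.tendsto.comp hmap
      simpa [Function.comp_def] using this
    have h3 : Tendsto (fun t => ‖y (1 + t) - y 1‖ ^ 2) l (𝓝 (‖(0:V)‖ ^ 2)) := by
      refine Tendsto.congr' ?_ ((h2.norm).pow 2)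
      filter_upwards [self_mem_nhdsWithin] with t ht
      rw [← hftc 1 (1 + t) one_pos (by simp [(mem_Ioi.mp ht).le])]
    simpa using h3
  have := hN.add hIlim
  simpa using this
end

section
/- Let η ∈ [0,1) and δ > 1, and let (y, y') be as in the context with N_{δ,η}(y) < ∞. Then y' is Bochner integrable on (1,∞), the limit value y(∞) := y(1) + ∫_1^∞ y'(x) dx is well defined, and lim_{t→∞} ( ‖y(1+t) − y(∞)‖_V² + ∫_0^∞ ‖y'(x+t)‖_V² v_{δ,η}(x) dx ) = 0. (This expresses the strong convergence S(t) → S_∞ of the shift semigroup S(t)y(x) = y(x+t) to the projection S_∞ y ≡ y(∞) on the modified Filipović space.) -/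
set_option maxHeartbeats 1000000


open MeasureTheory Set Filter

private lemma shift_embedding (t : ℝ) :
    MeasurableEmbedding (fun x : ℝ => x + t) := by
  simpa using (MeasurableEquiv.addRight t).measurableEmbedding

private lemma shift_integrableOn {E : Type*} [NormedAddCommGroup E] {F : ℝ → E} {t : ℝ}
    (hF : IntegrableOn F (Set.Ioi t)) :
    IntegrableOn (fun x => F (x + t)) (Set.Ioi 0) := by
  have h := (shift_embedding t).integrableOn_map_iff
    (f := F) (μ := (volume : Measure ℝ)) (s := Set.Ioi t)
  rw [map_add_right_eq_self volume t] at h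
  have hpre : (fun x : ℝ => x + t) ⁻¹' Set.Ioi t = Set.Ioi 0 := by
    ext x; simp
  have := h.mp hF
  rwa [hpre] at this

private lemma shift_integral {E : Type*} [NormedAddCommGroup E] [NormedSpace ℝ E]
    (F : ℝ → E) (t : ℝ) :
    ∫ x in Set.Ioi t, F x = ∫ x in Set.Ioi (0 : ℝ), F (x + t) := by
  have h := (shift_embedding t).setIntegral_map (μ := (volume : Measure ℝ)) F (Set.Ioi t)
  rw [map_add_right_eq_self volume t] at h
  have hpre : (fun x : ℝ => x + t) ⁻¹' Set.Ioi t = Set.Ioi 0 := by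
    ext x; simp
  rw [h, hpre]

private lemma tail_tendsto {F : ℝ → ℝ} (hF : IntegrableOn F (Set.Ioi 0)) :
    Tendsto (fun t : ℝ => ∫ x in Set.Ioi t, F x) atTop (nhds 0) := by
  have h1 : Tendsto (fun t : ℝ => ∫ x in (0:ℝ)..t, F x) atTop
      (nhds (∫ x in Set.Ioi (0:ℝ), F x)) :=
    intervalIntegral_tendsto_integral_Ioi 0 hF tendsto_id
  have h2 : Tendsto (fun t : ℝ => (∫ x in Set.Ioi (0:ℝ), F x) - ∫ x in (0:ℝ)..t, F x)
      atTop (nhds 0) := by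
    simpa using (tendsto_const_nhds (x := ∫ x in Set.Ioi (0:ℝ), F x)).sub h1
  refine h2.congr' ?_
  filter_upwards [eventually_ge_atTop (0:ℝ)] with t ht
  have hsplit : Set.Ioc (0:ℝ) t ∪ Set.Ioi t = Set.Ioi 0 := Set.Ioc_union_Ioi_eq_Ioi ht
  have htotal : ∫ x in Set.Ioi (0:ℝ), F x
      = (∫ x in Set.Ioc (0:ℝ) t, F x) + ∫ x in Set.Ioi t, F x := by
    rw [← hsplit]
    exact setIntegral_union (Set.Ioc_disjoint_Ioi le_rfl) measurableSet_Ioi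
      (hF.mono_set Set.Ioc_subset_Ioi_self) (hF.mono_set (Set.Ioi_subset_Ioi ht))
  rw [intervalIntegral.integral_of_le ht, htotal]
  ring

/-- Let `η ∈ [0,1)`, `δ > 1`, and let `(y,y')` be a pair with `y'` locally
Bochner integrable, `y(b) − y(a) = ∫_a^b y'` and `N_{δ,η}(y) < ∞`.  Then `y'` is Bochner
integrable on `(1,∞)`, the limit value `y(∞) := y(1) + ∫_1^∞ y'` is well defined, and
`lim_{t→∞} (‖y(1+t) − y(∞)‖² + ∫_0^∞ ‖y'(x+t)‖² v_{δ,η}(x) dx) = 0`. -/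
theorem shift_semigroup_convergence_to_projection
    {V : Type*} [NormedAddCommGroup V] [InnerProductSpace ℝ V]
    [SecondCountableTopology V] [CompleteSpace V]
    (δ η : ℝ) (hη : η ∈ Set.Ico (0 : ℝ) 1) (hδ : 1 < δ)
    (y y' : ℝ → V)
    (hloc : ∀ a b : ℝ, 0 < a → IntegrableOn y' (Set.Ioc a b))
    (hftc : ∀ a b : ℝ, 0 < a → a ≤ b → y b - y a = ∫ x in a..b, y' x)
    (hfin : IntegrableOn (fun x => ‖y' x‖ ^ 2 * weightV δ η x) (Set.Ioi 0)) :
    IntegrableOn y' (Set.Ioi 1) ∧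
      Tendsto (fun t : ℝ =>
          ‖y (1 + t) - (y 1 + ∫ x in Set.Ioi (1 : ℝ), y' x)‖ ^ 2
            + ∫ x in Set.Ioi (0 : ℝ), ‖y' (x + t)‖ ^ 2 * weightV δ η x)
        atTop (nhds 0) := by
  obtain ⟨hη0, hη1⟩ := hη
  have hδ0 : (0:ℝ) < δ := lt_trans one_pos hδ
  -- measurability of `y'` on `Ioi 1`
  have hmeas : AEStronglyMeasurable y' (volume.restrict (Set.Ioi 1)) := by
    have hU : Set.Ioi (1:ℝ) = ⋃ n : ℕ, Set.Ioc 1 (n : ℝ) := by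
      ext x
      simp only [Set.mem_Ioi, Set.mem_iUnion, Set.mem_Ioc]
      constructor
      · intro hx
        obtain ⟨n, hn⟩ := exists_nat_ge x
        exact ⟨n, hx, hn⟩
      · rintro ⟨n, hx, -⟩; exact hx
    rw [hU, aestronglyMeasurable_iUnion_iff]
    exact fun n => (hloc 1 n one_pos).aestronglyMeasurable
  -- integrability of `‖y'‖² x^δ` on `Ioi 1`
  have hFδ : IntegrableOn (fun x => ‖y' x‖ ^ 2 * x ^ δ) (Set.Ioi 1) := by
    refine IntegrableOn.congr_fun (hfin.mono_set (Set.Ioi_subset_Ioi zero_le_one))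
      ?_ measurableSet_Ioi
    intro x hx
    simp only [weightV, if_neg (not_le.mpr (Set.mem_Ioi.mp hx))]
  -- `y'` is integrable on `Ioi 1`
  have hint : IntegrableOn y' (Set.Ioi 1) := by
    have hpow : IntegrableOn (fun x : ℝ => x ^ (-δ)) (Set.Ioi 1) :=
      integrableOn_Ioi_rpow_of_lt (by linarith) one_pos
    have hmaj : IntegrableOn (fun x => (‖y' x‖ ^ 2 * x ^ δ + x ^ (-δ)) / 2) (Set.Ioi 1) :=
      (hFδ.add hpow).div_const 2
    refine hmaj.mono' hmeas ?_
    rw [ae_restrict_iff' measurableSet_Ioi]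
    filter_upwards with x hx
    have hx1 : (1:ℝ) < x := hx
    have hx0 : (0:ℝ) < x := lt_trans one_pos hx1
    set s : ℝ := x ^ (δ / 2) with hs_def
    have hs : 0 < s := Real.rpow_pos_of_pos hx0 _
    have hs2 : s * s = x ^ δ := by
      rw [hs_def, ← Real.rpow_add hx0]; norm_num
    have hsinv : s⁻¹ * s⁻¹ = x ^ (-δ) := by
      have h1 : s⁻¹ = x ^ (-(δ / 2)) := by rw [Real.rpow_neg hx0.le]
      rw [h1, ← Real.rpow_add hx0]
      congr 1; ring
    have hss : s * s⁻¹ = 1 := mul_inv_cancel₀ (ne_of_gt hs)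
    have key : 2 * (‖y' x‖ * s) * s⁻¹ ≤ (‖y' x‖ * s) ^ 2 + s⁻¹ ^ 2 :=
      two_mul_le_add_sq _ _
    have hnorm : ‖y' x‖ ≥ 0 := norm_nonneg _
    nlinarith [key, hs2, hsinv, hss, sq_nonneg (‖y' x‖ * s - s⁻¹)]
  refine ⟨hint, ?_⟩
  -- Part A : `‖y(1+t) − y(∞)‖² → 0`
  have hA : Tendsto (fun t : ℝ =>
      ‖y (1 + t) - (y 1 + ∫ x in Set.Ioi (1 : ℝ), y' x)‖ ^ 2) atTop (nhds 0) := by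
    have h1b : Tendsto (fun t : ℝ => (1 : ℝ) + t) atTop atTop :=
      tendsto_atTop_add_const_left atTop 1 tendsto_id
    have h1 : Tendsto (fun t : ℝ => ∫ x in (1:ℝ)..(1 + t), y' x) atTop
        (nhds (∫ x in Set.Ioi (1 : ℝ), y' x)) :=
      (intervalIntegral_tendsto_integral_Ioi 1 hint tendsto_id).comp h1b
    have h2 : Tendsto (fun t : ℝ =>
        (∫ x in (1:ℝ)..(1 + t), y' x) - ∫ x in Set.Ioi (1 : ℝ), y' x) atTop (nhds 0) := by
      simpa using h1.sub (tendsto_const_nhds (x := ∫ x in Set.Ioi (1:ℝ), y' x))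
    have h3 : Tendsto (fun t : ℝ =>
        ‖(∫ x in (1:ℝ)..(1 + t), y' x) - ∫ x in Set.Ioi (1 : ℝ), y' x‖ ^ 2) atTop
        (nhds 0) := by
      simpa using (h2.norm.pow 2)
    refine h3.congr' ?_
    filter_upwards [eventually_ge_atTop (0:ℝ)] with t ht
    have := hftc 1 (1 + t) one_pos (by linarith)
    rw [← this, sub_add_eq_sub_sub]
  -- Part B : the weighted tail integral tends to 0
  have hvge : ∀ t : ℝ, 1 ≤ t → ∀ x : ℝ, 0 < x →
      weightV δ η x ≤ weightV δ η (x + t) := by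
    intro t ht x hx
    have hxt1 : (1:ℝ) < x + t := by linarith
    have hv2 : weightV δ η (x + t) = (x + t) ^ δ := if_neg (not_le.mpr hxt1)
    by_cases h : x ≤ 1
    · have h1 : weightV δ η x = x ^ η := if_pos h
      rw [h1, hv2]
      calc x ^ η ≤ 1 := Real.rpow_le_one hx.le h hη0
        _ ≤ (x + t) ^ δ := Real.one_le_rpow hxt1.le hδ0.le
    · have h1 : weightV δ η x = x ^ δ := if_neg h
      rw [h1, hv2]
      exact Real.rpow_le_rpow hx.le (by linarith) hδ0.le
  have hB : Tendsto (fun t : ℝ =>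
      ∫ x in Set.Ioi (0 : ℝ), ‖y' (x + t)‖ ^ 2 * weightV δ η x) atTop (nhds 0) := by
    have hvnn : ∀ x : ℝ, 0 < x → 0 ≤ weightV δ η x := by
      intro x hx
      unfold weightV
      split <;> exact Real.rpow_nonneg hx.le _
    refine tendsto_of_tendsto_of_tendsto_of_le_of_le' tendsto_const_nhds
      (tail_tendsto hfin) ?_ ?_
    · filter_upwards with t
      exact setIntegral_nonneg measurableSet_Ioi
        (fun x hx => mul_nonneg (by positivity) (hvnn x hx))
    · filter_upwards [eventually_ge_atTop (1:ℝ)] with t ht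
      have ht0 : (0:ℝ) ≤ t := by linarith
      have hFt : IntegrableOn
          (fun x => ‖y' (x + t)‖ ^ 2 * weightV δ η (x + t)) (Set.Ioi 0) :=
        shift_integrableOn (F := fun x => ‖y' x‖ ^ 2 * weightV δ η x)
          (hfin.mono_set (Set.Ioi_subset_Ioi ht0))
      have hle : ∫ x in Set.Ioi (0 : ℝ), ‖y' (x + t)‖ ^ 2 * weightV δ η x
          ≤ ∫ x in Set.Ioi (0 : ℝ), ‖y' (x + t)‖ ^ 2 * weightV δ η (x + t) := by
        refine integral_mono_of_nonneg ?_ hFt ?_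
        · filter_upwards [ae_restrict_mem measurableSet_Ioi] with x hx
          exact mul_nonneg (by positivity) (hvnn x hx)
        · filter_upwards [ae_restrict_mem measurableSet_Ioi] with x hx
          exact mul_le_mul_of_nonneg_left (hvge t ht x hx) (by positivity)
      calc ∫ x in Set.Ioi (0 : ℝ), ‖y' (x + t)‖ ^ 2 * weightV δ η x
          ≤ ∫ x in Set.Ioi (0 : ℝ), ‖y' (x + t)‖ ^ 2 * weightV δ η (x + t) := hle
        _ = ∫ x in Set.Ioi t, ‖y' x‖ ^ 2 * weightV δ η x :=
            (shift_integral (fun x => ‖y' x‖ ^ 2 * weightV δ η x) t).symm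
  simpa using hA.add hB
end

section
/- Let η ∈ [0,1) and 1 < δ' < δ, and let (y, y') be as in the context with N_{δ,η}(y) < ∞. Set y(∞) := y(1) + ∫_1^∞ y'(x) dx. Then for every t ≥ 0: ‖y(1+t) − y(∞)‖_V² + ∫_0^∞ ‖y'(x+t)‖_V² v_{δ',η}(x) dx ≤ (2 + 1/(δ'−1)) · (max(1,t))^{−(δ−δ')} · N_{δ,η}(y)². (This expresses the polynomial rate of convergence of the shift semigroup S(t)y(x) = y(x+t) to the projection S_∞ y ≡ y(∞), measured from the modified Filipović space with weight v_{δ,η} into the one with weight v_{δ',η}.) -/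
open MeasureTheory Set

lemma weightV_nonneg {δ η x : ℝ} (hx : 0 ≤ x) : 0 ≤ weightV δ η x := by
  unfold weightV; split <;> exact Real.rpow_nonneg hx _

/-- Key pointwise weight comparison for the shifted weight. -/
lemma weightV_key {δ δ' η t u : ℝ} (hη0 : 0 ≤ η) (hδ' : 1 < δ') (hδ : δ' < δ)
    (ht : 0 ≤ t) (hu : t < u) :
    weightV δ' η (u - t) ≤ (max 1 t) ^ (δ' - δ) * weightV δ η u := by
  have hm1 : (1:ℝ) ≤ max 1 t := le_max_left _ _
  have hm0 : (0:ℝ) < max 1 t := lt_of_lt_of_le one_pos hm1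
  have hw0 : 0 < u - t := sub_pos.mpr hu
  have hu0 : 0 < u := lt_of_le_of_lt ht hu
  unfold weightV
  by_cases hw : u - t ≤ 1
  · rw [if_pos hw]
    by_cases hu1 : u ≤ 1
    · rw [if_pos hu1]
      have hmt : max 1 t = 1 := max_eq_left (by linarith)
      rw [hmt, Real.one_rpow, one_mul]
      exact Real.rpow_le_rpow hw0.le (by linarith) hη0
    · rw [if_neg hu1]
      push_neg at hu1
      have hum : max 1 t ≤ u := max_le hu1.le hu.le
      have hL : (u - t) ^ η ≤ 1 := Real.rpow_le_one hw0.le hw hη0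
      have h3 : (1:ℝ) ≤ (max 1 t) ^ δ' := Real.one_le_rpow hm1 (by linarith)
      have h2 : (max 1 t) ^ δ' ≤ (max 1 t) ^ (δ' - δ) * u ^ δ := by
        have hb : (max 1 t) ^ δ ≤ u ^ δ := Real.rpow_le_rpow hm0.le hum (by linarith)
        calc (max 1 t) ^ δ' = (max 1 t) ^ (δ' - δ) * (max 1 t) ^ δ := by
              rw [← Real.rpow_add hm0]; ring_nf
          _ ≤ (max 1 t) ^ (δ' - δ) * u ^ δ :=
              mul_le_mul_of_nonneg_left hb (Real.rpow_nonneg hm0.le _)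
      linarith
  · rw [if_neg hw]
    push_neg at hw
    have hu1 : ¬ u ≤ 1 := by push_neg; nlinarith
    rw [if_neg hu1]
    push_neg at hu1
    have hum : max 1 t ≤ u := max_le hu1.le hu.le
    calc (u - t) ^ δ' ≤ u ^ δ' := Real.rpow_le_rpow hw0.le (by linarith) (by linarith)
      _ = u ^ (δ' - δ) * u ^ δ := by rw [← Real.rpow_add hu0]; ring_nf
      _ ≤ (max 1 t) ^ (δ' - δ) * u ^ δ :=
          mul_le_mul_of_nonneg_right
            (Real.rpow_le_rpow_of_nonpos hm0 hum (by linarith))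
            (Real.rpow_nonneg hu0.le _)

/-- Let `η ∈ [0,1)`, `1 < δ' < δ`, and let `(y,y')` be a pair with `y'`
locally Bochner integrable, `y(b) − y(a) = ∫_a^b y'` and `N_{δ,η}(y) < ∞`.  Set
`y(∞) := y(1) + ∫_1^∞ y'`.  Then for every `t ≥ 0`:
`‖y(1+t) − y(∞)‖² + ∫_0^∞ ‖y'(x+t)‖² v_{δ',η}(x) dx
  ≤ (2 + 1/(δ'−1)) (max(1,t))^{−(δ−δ')} N_{δ,η}(y)²`. -/
theorem shift_semigroup_convergence_rate
    {V : Type*} [NormedAddCommGroup V] [InnerProductSpace ℝ V]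
    [SecondCountableTopology V] [CompleteSpace V]
    (δ δ' η : ℝ) (hη : η ∈ Set.Ico (0 : ℝ) 1) (hδ' : 1 < δ') (hδ : δ' < δ)
    (y y' : ℝ → V)
    (hloc : ∀ a b : ℝ, 0 < a → IntegrableOn y' (Set.Ioc a b))
    (hftc : ∀ a b : ℝ, 0 < a → a ≤ b → y b - y a = ∫ x in a..b, y' x)
    (hfin : IntegrableOn (fun x => ‖y' x‖ ^ 2 * weightV δ η x) (Set.Ioi 0))
    (t : ℝ) (ht : 0 ≤ t) :
    ‖y (1 + t) - (y 1 + ∫ x in Set.Ioi (1 : ℝ), y' x)‖ ^ 2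
        + (∫ x in Set.Ioi (0 : ℝ), ‖y' (x + t)‖ ^ 2 * weightV δ' η x) ≤
      (2 + 1 / (δ' - 1)) * (max 1 t) ^ (-(δ - δ')) *
        (‖y 1‖ ^ 2 + ∫ x in Set.Ioi (0 : ℝ), ‖y' x‖ ^ 2 * weightV δ η x) := by
  obtain ⟨hη0, hη1⟩ := hη
  have hm1 : (1:ℝ) ≤ max 1 t := le_max_left _ _
  have hm0 : (0:ℝ) < max 1 t := lt_of_lt_of_le one_pos hm1
  set c : ℝ := 1 + t with hc
  have hc1 : (1:ℝ) ≤ c := by simp [hc]; linarith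
  have hc0 : (0:ℝ) < c := by linarith
  have hmc : max 1 t ≤ c := max_le (by linarith) (by linarith)
  set I : ℝ := ∫ x in Ioi (0:ℝ), ‖y' x‖ ^ 2 * weightV δ η x with hIdef
  have hInn : 0 ≤ I := setIntegral_nonneg measurableSet_Ioi fun x hx =>
    mul_nonneg (by positivity) (weightV_nonneg (le_of_lt hx))
  -- a.e. strong measurability of y' on (0, ∞)
  have hmeas : AEStronglyMeasurable y' (volume.restrict (Ioi (0:ℝ))) := by
    have hun : Ioi (0:ℝ) = ⋃ n : ℕ, Ioc ((n+1:ℝ)⁻¹) (n+1) := by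
      ext x
      simp only [mem_Ioi, mem_iUnion, mem_Ioc]
      constructor
      · intro hx
        obtain ⟨n, hn⟩ := exists_nat_gt (max x⁻¹ x)
        have h1 : x⁻¹ < n := lt_of_le_of_lt (le_max_left _ _) hn
        have h2 : x < n := lt_of_le_of_lt (le_max_right _ _) hn
        refine ⟨n, ?_, by linarith⟩
        have hn1 : x⁻¹ < (n:ℝ) + 1 := by linarith
        calc ((n:ℝ)+1)⁻¹ < (x⁻¹)⁻¹ := by
              apply inv_strictAnti₀ (by positivity) hn1
          _ = x := inv_inv x
      · rintro ⟨n, h1, h2⟩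
        exact lt_trans (by positivity) h1
    rw [hun, aestronglyMeasurable_iUnion_iff]
    intro n
    exact (hloc _ _ (by positivity)).aestronglyMeasurable
  have hmeas1 : AEStronglyMeasurable y' (volume.restrict (Ioi (1:ℝ))) :=
    hmeas.mono_measure (Measure.restrict_mono (Ioi_subset_Ioi (by norm_num)) le_rfl)
  have hmeasc : AEStronglyMeasurable y' (volume.restrict (Ioi c)) :=
    hmeas.mono_measure (Measure.restrict_mono (Ioi_subset_Ioi hc0.le) le_rfl)
  -- integrability of ‖y'‖² x^δ on (1, ∞)
  have hIδ : IntegrableOn (fun x => ‖y' x‖ ^ 2 * x ^ δ) (Ioi (1:ℝ)) := by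
    refine (hfin.mono_set (Ioi_subset_Ioi zero_le_one)).congr_fun
      (fun x hx => ?_) measurableSet_Ioi
    simp [weightV, not_le.mpr (show (1:ℝ) < x from hx)]
  -- tail comparison
  have htail : ∀ a : ℝ, 1 ≤ a → (∫ x in Ioi a, ‖y' x‖ ^ 2 * x ^ δ) ≤ I := by
    intro a ha
    have h1 : (∫ x in Ioi a, ‖y' x‖ ^ 2 * x ^ δ)
        = ∫ x in Ioi a, ‖y' x‖ ^ 2 * weightV δ η x := by
      refine setIntegral_congr_fun measurableSet_Ioi fun x hx => ?_
      have : ¬ x ≤ 1 := not_le.mpr (lt_of_le_of_lt ha hx)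
      simp [weightV, this]
    rw [h1]
    refine setIntegral_mono_set hfin ?_ ?_
    · exact ae_restrict_of_forall_mem measurableSet_Ioi fun x hx =>
        mul_nonneg (by positivity) (weightV_nonneg (le_of_lt hx))
    · exact HasSubset.Subset.eventuallyLE (Ioi_subset_Ioi (by linarith))
  -- y' is integrable on (1, ∞)
  have hy'int : IntegrableOn y' (Ioi (1:ℝ)) := by
    have hg : IntegrableOn (fun x => (‖y' x‖ ^ 2 * x ^ δ + x ^ (-δ)) / 2) (Ioi (1:ℝ)) :=
      (hIδ.add (integrableOn_Ioi_rpow_of_lt (by linarith) one_pos)).div_const 2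
    refine Integrable.mono' hg hmeas1 ?_
    refine ae_restrict_of_forall_mem measurableSet_Ioi fun x hx => ?_
    have hx0 : (0:ℝ) < x := lt_trans one_pos hx
    have hp : (0:ℝ) < x ^ (δ/2) := Real.rpow_pos_of_pos hx0 _
    have h2 : x ^ δ = (x ^ (δ/2)) ^ 2 := by
      rw [← Real.rpow_natCast (x ^ (δ/2)) 2, ← Real.rpow_mul hx0.le]
      norm_num
    have h3 : x ^ (-δ) = ((x ^ (δ/2))⁻¹) ^ 2 := by
      rw [← Real.rpow_neg hx0.le, ← Real.rpow_natCast (x ^ (-(δ/2))) 2,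
        ← Real.rpow_mul hx0.le]
      norm_num
    rw [h2, h3]
    nlinarith [sq_nonneg (‖y' x‖ * x ^ (δ/2) - (x ^ (δ/2))⁻¹),
      mul_inv_cancel₀ (ne_of_gt hp), norm_nonneg (y' x), hp, sq_nonneg (x ^ (δ/2))⁻¹]
  have hy'intc : IntegrableOn y' (Ioi c) := hy'int.mono_set (Ioi_subset_Ioi hc1)
  -- split the integral over (1, ∞)
  have hsplit : (∫ x in Ioi (1:ℝ), y' x)
      = (∫ x in Ioc 1 c, y' x) + ∫ x in Ioi c, y' x := by
    rw [← setIntegral_union (Ioc_disjoint_Ioi le_rfl) measurableSet_Ioi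
      (hy'int.mono_set Ioc_subset_Ioi_self) hy'intc, Ioc_union_Ioi_eq_Ioi hc1]
  have hkey1 : y (1 + t) - (y 1 + ∫ x in Ioi (1:ℝ), y' x) = - ∫ x in Ioi c, y' x := by
    have h := hftc 1 c one_pos hc1
    rw [intervalIntegral.integral_of_le hc1] at h
    rw [hsplit, ← hc, ← h]
    abel
  have hnorm1 : ‖y (1 + t) - (y 1 + ∫ x in Ioi (1:ℝ), y' x)‖
      = ‖∫ x in Ioi c, y' x‖ := by rw [hkey1, norm_neg]
  -- Cauchy–Schwarz on the tail integral
  have hrm : ∀ e : ℝ, AEStronglyMeasurable (fun x : ℝ => x ^ e) (volume.restrict (Ioi c)) :=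
    fun e => (ContinuousOn.rpow_const continuousOn_id
      (fun x hx => Or.inl (ne_of_gt (lt_trans hc0 hx)))).aestronglyMeasurable measurableSet_Ioi
  set A : ℝ := ∫ x in Ioi c, ‖y' x‖ ^ 2 * x ^ δ' with hAdef
  set B : ℝ := ∫ x in Ioi c, x ^ (-δ') with hBdef
  have hfint : IntegrableOn (fun x => ‖y' x‖ ^ 2 * x ^ δ') (Ioi c) := by
    refine Integrable.mono' (hIδ.mono_set (Ioi_subset_Ioi hc1)) ?_ ?_
    · exact (hmeasc.norm.pow 2).mul (hrm δ')
    · refine ae_restrict_of_forall_mem measurableSet_Ioi fun x hx => ?_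
      have hx1 : (1:ℝ) ≤ x := le_of_lt (lt_of_le_of_lt hc1 hx)
      have h1 : x ^ δ' ≤ x ^ δ :=
        Real.rpow_le_rpow_of_exponent_le hx1 (le_of_lt hδ)
      have h0 : 0 ≤ x ^ δ' := Real.rpow_nonneg (by linarith) _
      rw [Real.norm_of_nonneg (mul_nonneg (by positivity) h0)]
      exact mul_le_mul_of_nonneg_left h1 (by positivity)
  have hBint : IntegrableOn (fun x : ℝ => x ^ (-δ')) (Ioi c) :=
    integrableOn_Ioi_rpow_of_lt (by linarith) hc0
  have hAnn : 0 ≤ A := setIntegral_nonneg measurableSet_Ioi fun x hx =>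
    mul_nonneg (by positivity) (Real.rpow_nonneg (by linarith [lt_of_le_of_lt hc1 hx]) _)
  have hBnn : 0 ≤ B := setIntegral_nonneg measurableSet_Ioi fun x hx =>
    Real.rpow_nonneg (by linarith [lt_trans hc0 hx]) _
  have hCS : (∫ x in Ioi c, ‖y' x‖) ≤ A ^ ((1:ℝ)/2) * B ^ ((1:ℝ)/2) := by
    have hpq : Real.HolderConjugate 2 2 := ⟨by norm_num, by norm_num, by norm_num⟩
    have hfmem : MemLp (fun x => ‖y' x‖ * x ^ (δ'/2)) (ENNReal.ofReal 2)
        (volume.restrict (Ioi c)) := by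
      rw [show ENNReal.ofReal 2 = 2 by norm_num]
      refine (memLp_two_iff_integrable_sq ?_).mpr ?_
      · exact hmeasc.norm.mul (hrm (δ'/2))
      · refine hfint.congr_fun (fun x hx => ?_) measurableSet_Ioi
        have hx0 : (0:ℝ) < x := lt_trans hc0 hx
        have : (x ^ (δ'/2)) ^ 2 = x ^ δ' := by
          rw [← Real.rpow_natCast (x ^ (δ'/2)) 2, ← Real.rpow_mul hx0.le]
          norm_num
        rw [mul_pow, this]
    have hgmem : MemLp (fun x : ℝ => x ^ (-δ'/2)) (ENNReal.ofReal 2)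
        (volume.restrict (Ioi c)) := by
      rw [show ENNReal.ofReal 2 = 2 by norm_num]
      refine (memLp_two_iff_integrable_sq (hrm (-δ'/2))).mpr ?_
      refine hBint.congr_fun (fun x hx => ?_) measurableSet_Ioi
      have hx0 : (0:ℝ) < x := lt_trans hc0 hx
      rw [← Real.rpow_natCast (x ^ (-δ'/2)) 2, ← Real.rpow_mul hx0.le]
      norm_num
    have hH := integral_mul_le_Lp_mul_Lq_of_nonneg hpq
      (μ := volume.restrict (Ioi c))
      (f := fun x => ‖y' x‖ * x ^ (δ'/2)) (g := fun x : ℝ => x ^ (-δ'/2))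
      (ae_restrict_of_forall_mem measurableSet_Ioi fun x hx =>
        mul_nonneg (norm_nonneg _) (Real.rpow_nonneg (le_of_lt (lt_trans hc0 hx)) _))
      (ae_restrict_of_forall_mem measurableSet_Ioi fun x hx =>
        Real.rpow_nonneg (le_of_lt (lt_trans hc0 hx)) _)
      hfmem hgmem
    have hLHS : (∫ x in Ioi c, ‖y' x‖)
        = ∫ x in Ioi c, (‖y' x‖ * x ^ (δ'/2)) * x ^ (-δ'/2) := by
      refine setIntegral_congr_fun measurableSet_Ioi fun x hx => ?_
      have hx0 : (0:ℝ) < x := lt_trans hc0 hx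
      rw [mul_assoc, ← Real.rpow_add hx0,
        show δ' / 2 + -δ' / 2 = 0 by ring, Real.rpow_zero, mul_one]
    have hF : (∫ x in Ioi c, (‖y' x‖ * x ^ (δ'/2)) ^ (2:ℝ)) = A := by
      refine setIntegral_congr_fun measurableSet_Ioi fun x hx => ?_
      have hx0 : (0:ℝ) < x := lt_trans hc0 hx
      have hb : 0 ≤ ‖y' x‖ * x ^ (δ'/2) :=
        mul_nonneg (norm_nonneg _) (Real.rpow_nonneg hx0.le _)
      rw [Real.rpow_two, mul_pow,
        ← Real.rpow_natCast (x ^ (δ'/2)) 2, ← Real.rpow_mul hx0.le]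
      norm_num
    have hG : (∫ x in Ioi c, (x ^ (-δ'/2)) ^ (2:ℝ)) = B := by
      refine setIntegral_congr_fun measurableSet_Ioi fun x hx => ?_
      have hx0 : (0:ℝ) < x := lt_trans hc0 hx
      rw [Real.rpow_two,
        ← Real.rpow_natCast (x ^ (-δ'/2)) 2, ← Real.rpow_mul hx0.le]
      norm_num
    rw [hLHS]
    calc (∫ x in Ioi c, (‖y' x‖ * x ^ (δ'/2)) * x ^ (-δ'/2))
        ≤ (∫ x in Ioi c, (‖y' x‖ * x ^ (δ'/2)) ^ (2:ℝ)) ^ ((1:ℝ)/2)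
          * (∫ x in Ioi c, (x ^ (-δ'/2)) ^ (2:ℝ)) ^ ((1:ℝ)/2) := hH
      _ = A ^ ((1:ℝ)/2) * B ^ ((1:ℝ)/2) := by rw [hF, hG]
  -- square the Cauchy–Schwarz bound
  have hR : ‖∫ x in Ioi c, y' x‖ ^ 2 ≤ A * B := by
    have h0 : ‖∫ x in Ioi c, y' x‖ ≤ ∫ x in Ioi c, ‖y' x‖ :=
      norm_integral_le_integral_norm _
    have h1 : ‖∫ x in Ioi c, y' x‖ ≤ A ^ ((1:ℝ)/2) * B ^ ((1:ℝ)/2) := h0.trans hCS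
    have h2 : (A ^ ((1:ℝ)/2) * B ^ ((1:ℝ)/2)) ^ 2 = A * B := by
      rw [mul_pow, ← Real.rpow_natCast (A ^ ((1:ℝ)/2)) 2, ← Real.rpow_natCast
        (B ^ ((1:ℝ)/2)) 2, ← Real.rpow_mul hAnn, ← Real.rpow_mul hBnn]
      norm_num
    calc ‖∫ x in Ioi c, y' x‖ ^ 2 ≤ (A ^ ((1:ℝ)/2) * B ^ ((1:ℝ)/2)) ^ 2 :=
          pow_le_pow_left₀ (norm_nonneg _) h1 2
      _ = A * B := h2
  -- bound A
  have hA_le : A ≤ c ^ (δ' - δ) * I := by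
    have step1 : A ≤ ∫ x in Ioi c, c ^ (δ' - δ) * (‖y' x‖ ^ 2 * x ^ δ) := by
      refine setIntegral_mono_on hfint
        ((hIδ.mono_set (Ioi_subset_Ioi hc1)).const_mul _) measurableSet_Ioi
        fun x hx => ?_
      have hx0 : (0:ℝ) < x := lt_trans hc0 hx
      have hxe : x ^ δ' = x ^ (δ' - δ) * x ^ δ := by
        rw [← Real.rpow_add hx0]; ring_nf
      have hcx : x ^ (δ' - δ) ≤ c ^ (δ' - δ) :=
        Real.rpow_le_rpow_of_nonpos hc0 (le_of_lt hx) (by linarith)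
      calc ‖y' x‖ ^ 2 * x ^ δ' = x ^ (δ' - δ) * (‖y' x‖ ^ 2 * x ^ δ) := by
            rw [hxe]; ring
        _ ≤ c ^ (δ' - δ) * (‖y' x‖ ^ 2 * x ^ δ) :=
            mul_le_mul_of_nonneg_right hcx
              (mul_nonneg (by positivity) (Real.rpow_nonneg hx0.le _))
    rw [integral_const_mul] at step1
    calc A ≤ c ^ (δ' - δ) * ∫ x in Ioi c, ‖y' x‖ ^ 2 * x ^ δ := step1
      _ ≤ c ^ (δ' - δ) * I :=
          mul_le_mul_of_nonneg_left (htail c hc1) (Real.rpow_nonneg hc0.le _)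
  -- bound B
  have hB_le : B ≤ 1 / (δ' - 1) := by
    have hBval : B = c ^ (1 - δ') / (δ' - 1) := by
      rw [hBdef, integral_Ioi_rpow_of_lt (by linarith) hc0]
      rw [show -δ' + 1 = 1 - δ' by ring]
      rw [div_eq_div_iff (by linarith) (by linarith)]
      ring
    rw [hBval]
    have h1 : c ^ (1 - δ') ≤ 1 :=
      Real.rpow_le_one_of_one_le_of_nonpos hc1 (by linarith)
    have h2 : (0:ℝ) < δ' - 1 := by linarith
    gcongr
  -- first term bound
  have hT1 : ‖∫ x in Ioi c, y' x‖ ^ 2 ≤ (max 1 t) ^ (δ' - δ) * I * (1 / (δ' - 1)) := by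
    have hcm : c ^ (δ' - δ) ≤ (max 1 t) ^ (δ' - δ) :=
      Real.rpow_le_rpow_of_nonpos hm0 hmc (by linarith)
    have h1 : A * B ≤ (c ^ (δ' - δ) * I) * (1 / (δ' - 1)) :=
      mul_le_mul hA_le hB_le hBnn (mul_nonneg (Real.rpow_nonneg hc0.le _) hInn)
    have h2 : (c ^ (δ' - δ) * I) * (1 / (δ' - 1))
        ≤ ((max 1 t) ^ (δ' - δ) * I) * (1 / (δ' - 1)) := by
      have := mul_le_mul_of_nonneg_right hcm hInn
      have h3 : (0:ℝ) ≤ 1 / (δ' - 1) := le_of_lt (one_div_pos.mpr (by linarith))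
      exact mul_le_mul_of_nonneg_right (mul_le_mul_of_nonneg_right hcm hInn) h3
    linarith [hR]
  -- translation of the second term
  have hshift : (∫ x in Ioi (0:ℝ), ‖y' (x + t)‖ ^ 2 * weightV δ' η x)
      = ∫ u in Ioi t, ‖y' u‖ ^ 2 * weightV δ' η (u - t) := by
    rw [← (measurePreserving_add_right volume t).setIntegral_preimage_emb
      (measurableEmbedding_addRight t)
      (fun u => ‖y' u‖ ^ 2 * weightV δ' η (u - t)) (Ioi t)]
    have hpre : (fun x : ℝ => x + t) ⁻¹' (Ioi t) = Ioi (0:ℝ) := by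
      ext x; simp
    rw [hpre]
    simp only [add_sub_cancel_right]
  -- second term bound
  have hT2 : (∫ x in Ioi (0:ℝ), ‖y' (x + t)‖ ^ 2 * weightV δ' η x)
      ≤ (max 1 t) ^ (δ' - δ) * I := by
    rw [hshift]
    have hint : IntegrableOn
        (fun u => (max 1 t) ^ (δ' - δ) * (‖y' u‖ ^ 2 * weightV δ η u)) (Ioi t) :=
      (hfin.mono_set (Ioi_subset_Ioi ht)).const_mul _
    have step : (∫ u in Ioi t, ‖y' u‖ ^ 2 * weightV δ' η (u - t))
        ≤ ∫ u in Ioi t, (max 1 t) ^ (δ' - δ) * (‖y' u‖ ^ 2 * weightV δ η u) := by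
      refine integral_mono_of_nonneg ?_ hint ?_
      · refine ae_restrict_of_forall_mem measurableSet_Ioi fun u hu => ?_
        have : (0:ℝ) ≤ u - t := by
          simp only [mem_Ioi] at hu; linarith
        exact mul_nonneg (by positivity) (weightV_nonneg this)
      · refine ae_restrict_of_forall_mem measurableSet_Ioi fun u hu => ?_
        simp only [mem_Ioi] at hu
        have hkey := weightV_key hη0 hδ' hδ ht hu
        calc ‖y' u‖ ^ 2 * weightV δ' η (u - t)
            ≤ ‖y' u‖ ^ 2 * ((max 1 t) ^ (δ' - δ) * weightV δ η u) :=
              mul_le_mul_of_nonneg_left hkey (by positivity)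
          _ = (max 1 t) ^ (δ' - δ) * (‖y' u‖ ^ 2 * weightV δ η u) := by ring
    rw [integral_const_mul] at step
    have h2 : (∫ u in Ioi t, ‖y' u‖ ^ 2 * weightV δ η u) ≤ I := by
      refine setIntegral_mono_set hfin ?_ ?_
      · exact ae_restrict_of_forall_mem measurableSet_Ioi fun x hx =>
          mul_nonneg (by positivity) (weightV_nonneg (le_of_lt hx))
      · exact HasSubset.Subset.eventuallyLE (Ioi_subset_Ioi ht)
    calc (∫ u in Ioi t, ‖y' u‖ ^ 2 * weightV δ' η (u - t))
        ≤ (max 1 t) ^ (δ' - δ) * ∫ u in Ioi t, ‖y' u‖ ^ 2 * weightV δ η u := step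
      _ ≤ (max 1 t) ^ (δ' - δ) * I :=
          mul_le_mul_of_nonneg_left h2 (Real.rpow_nonneg hm0.le _)
  -- combine
  have hexp : -(δ - δ') = δ' - δ := by ring
  rw [hnorm1, hexp]
  have hP : (0:ℝ) < (max 1 t) ^ (δ' - δ) := Real.rpow_pos_of_pos hm0 _
  have hs : (0:ℝ) < 1 / (δ' - 1) := one_div_pos.mpr (by linarith)
  have hy1 : (0:ℝ) ≤ ‖y 1‖ ^ 2 := by positivity
  nlinarith [hT1, hT2, mul_nonneg hP.le hInn, mul_nonneg (mul_nonneg hP.le hInn) hs.le,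
    mul_nonneg hP.le hy1, mul_nonneg (mul_nonneg hP.le hy1) hs.le]
end
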